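/- arXiv:1608.07847 — 3 statements merged into one kernel-verified Lean document; each statement's English description precedes it below -/
import Mathlib

section
/- For an m×n matrix over colors [1,σ], the number of maximal rectangles (rectangles whose fingerprint strictly grows under any one-step extension in any of the four directions) is at most n·m²·σ. -/
/-- The fingerprint (set of distinct colors) of the rectangle ⟨i₀,i₁;j₀,j₁⟩ of the
image `M`. -/
def fpF {m n σ : ℕ} (M : Fin m → Fin n → Fin σ) (i0 i1 : Fin m) (j0 j1 : Fin n) :
    Finset (Fin σ) :=
  Finset.image (fun p : Fin m × Fin n => M p.1 p.2)
    (Finset.univ.filter fun p : Fin m × Fin n =>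
      i0 ≤ p.1 ∧ p.1 ≤ i1 ∧ j0 ≤ p.2 ∧ p.2 ≤ j1)

/-- A rectangle is maximal if every rectangle properly containing it has a strictly
larger fingerprint. -/
def MaximalRect {m n σ : ℕ} (M : Fin m → Fin n → Fin σ)
    (i0 i1 : Fin m) (j0 j1 : Fin n) : Prop :=
  i0 ≤ i1 ∧ j0 ≤ j1 ∧
  ∀ i0' i1' : Fin m, ∀ j0' j1' : Fin n,
    i0' ≤ i0 → i1 ≤ i1' → j0' ≤ j0 → j1 ≤ j1' →
    (i0', i1', j0', j1') ≠ (i0, i1, j0, j1) →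
    fpF M i0 i1 j0 j1 ⊂ fpF M i0' i1' j0' j1'

lemma mem_fpF {m n σ : ℕ} (M : Fin m → Fin n → Fin σ) {i0 i1 : Fin m} {j0 j1 : Fin n}
    (h1 : i0 ≤ i1) (h2 : j0 ≤ j1) : M i0 j0 ∈ fpF M i0 i1 j0 j1 := by
  simp only [fpF, Finset.mem_image, Finset.mem_filter, Finset.mem_univ, true_and]
  exact ⟨(i0, j0), ⟨le_rfl, h1, le_rfl, h2⟩, rfl⟩

lemma fpF_card_le {m n σ : ℕ} (M : Fin m → Fin n → Fin σ) (i0 i1 : Fin m) (j0 j1 : Fin n) :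
    (fpF M i0 i1 j0 j1).card ≤ σ := by
  simpa using Finset.card_le_univ (fpF M i0 i1 j0 j1)

lemma fpF_card_pos {m n σ : ℕ} (M : Fin m → Fin n → Fin σ) {i0 i1 : Fin m} {j0 j1 : Fin n}
    (h1 : i0 ≤ i1) (h2 : j0 ≤ j1) : 0 < (fpF M i0 i1 j0 j1).card :=
  Finset.card_pos.mpr ⟨_, mem_fpF M h1 h2⟩

lemma key_lt {m n σ : ℕ} (M : Fin m → Fin n → Fin σ) {i0 i1 : Fin m} {j0 j0' j1 : Fin n}
    (hb : MaximalRect M i0 i1 j0' j1) (h : j0 < j0') :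
    (fpF M i0 i1 j0' j1).card < (fpF M i0 i1 j0 j1).card := by
  refine Finset.card_lt_card (hb.2.2 i0 i1 j0 j1 le_rfl le_rfl h.le le_rfl ?_)
  simp [Prod.ext_iff, h.ne]

/-- The number of maximal rectangles of an m×n image over colors [1,σ] is at most
n·m²·σ. -/
theorem statement0 (m n σ : ℕ) (M : Fin m → Fin n → Fin σ) :
    {r : Fin m × Fin m × Fin n × Fin n |
      MaximalRect M r.1 r.2.1 r.2.2.1 r.2.2.2}.ncard ≤ n * m ^ 2 * σ := by
  rcases Nat.eq_zero_or_pos σ with hσ | hσ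
  · have : {r : Fin m × Fin m × Fin n × Fin n |
      MaximalRect M r.1 r.2.1 r.2.2.1 r.2.2.2} = ∅ := by
      ext r
      simp only [Set.mem_setOf_eq, Set.mem_empty_iff_false, iff_false]
      intro _
      exact absurd (M r.1 r.2.2.1).isLt (by omega)
    simp [this]
  · set f : Fin m × Fin m × Fin n × Fin n → Fin m × Fin m × Fin n × Fin σ :=
      fun r => (r.1, r.2.1, r.2.2.2,
        ⟨((fpF M r.1 r.2.1 r.2.2.1 r.2.2.2).card - 1) % σ, Nat.mod_lt _ hσ⟩) with hf
    have hmaps : ∀ r ∈ {r : Fin m × Fin m × Fin n × Fin n |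
        MaximalRect M r.1 r.2.1 r.2.2.1 r.2.2.2}, f r ∈ (Set.univ : Set _) :=
      fun _ _ => Set.mem_univ _
    have hmod : ∀ r : Fin m × Fin m × Fin n × Fin n,
        MaximalRect M r.1 r.2.1 r.2.2.1 r.2.2.2 →
        ((fpF M r.1 r.2.1 r.2.2.1 r.2.2.2).card - 1) % σ
          = (fpF M r.1 r.2.1 r.2.2.1 r.2.2.2).card - 1 := by
      intro r hr
      have h1 := fpF_card_pos M hr.1 hr.2.1
      have h2 := fpF_card_le M r.1 r.2.1 r.2.2.1 r.2.2.2
      exact Nat.mod_eq_of_lt (by omega)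
    have hinj : Set.InjOn f {r : Fin m × Fin m × Fin n × Fin n |
        MaximalRect M r.1 r.2.1 r.2.2.1 r.2.2.2} := by
      rintro ⟨i0, i1, j0, j1⟩ ha ⟨i0', i1', j0', j1'⟩ hb heq
      simp only [Set.mem_setOf_eq] at ha hb
      simp only [hf, Prod.mk.injEq, Fin.mk.injEq] at heq
      obtain ⟨h1, h2, h3, h4⟩ := heq
      subst h1; subst h2; subst h3
      rw [hmod (i0, i1, j0, j1) ha, hmod (i0, i1, j0', j1) hb] at h4
      have hca := fpF_card_pos M ha.1 ha.2.1
      have hcb := fpF_card_pos M hb.1 hb.2.1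
      have hcard : (fpF M i0 i1 j0 j1).card = (fpF M i0 i1 j0' j1).card := by
        simp only at h4 hca hcb; omega
      rcases lt_trichotomy j0 j0' with h | h | h
      · exact absurd hcard (key_lt M hb h).ne'
      · simp [h]
      · exact absurd hcard (key_lt M ha h).ne
    calc {r : Fin m × Fin m × Fin n × Fin n |
        MaximalRect M r.1 r.2.1 r.2.2.1 r.2.2.2}.ncard
        ≤ (Set.univ : Set (Fin m × Fin m × Fin n × Fin σ)).ncard :=
          Set.ncard_le_ncard_of_injOn f hmaps hinj (Set.finite_univ)
      _ = m * (m * (n * σ)) := by simp [Set.ncard_univ]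
      _ ≤ n * m ^ 2 * σ := by ring_nf; omega
end

section
/- A square [i,j;k] in an image is maximal (among squares) if and only if the Boolean condition (L ∨ U ∨ LU) ∧ (L ∨ D ∨ LD) ∧ (R ∨ U ∨ RU) ∧ (R ∨ D ∨ RD) holds, where the conditions are as defined in the context. -/
/-- Fingerprint (set of distinct colors) of the rectangle ⟨i₀,i₁;j₀,j₁⟩ of a
1-indexed image `M`. -/
def fpR (M : ℕ → ℕ → ℕ) (i0 i1 j0 j1 : ℕ) : Set ℕ :=
  {c | ∃ i j, i0 ≤ i ∧ i ≤ i1 ∧ j0 ≤ j ∧ j ≤ j1 ∧ M i j = c}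

/-- Fingerprint of the square [i,j;k] = ⟨i,i+k−1;j,j+k−1⟩. -/
def fpSq (M : ℕ → ℕ → ℕ) (i j k : ℕ) : Set ℕ :=
  fpR M i (i + k - 1) j (j + k - 1)

/-- The square [i,j;k] fits inside the m×n image (1-indexed). -/
def ValidSq (m n i j k : ℕ) : Prop :=
  1 ≤ i ∧ 1 ≤ j ∧ 1 ≤ k ∧ i + k - 1 ≤ m ∧ j + k - 1 ≤ n

/-- The square [i,j;k] is contained in the square [i',j';k']. -/
def SqContains (i j k i' j' k' : ℕ) : Prop :=
  i' ≤ i ∧ j' ≤ j ∧ i + k ≤ i' + k' ∧ j + k ≤ j' + k'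

/-- A square is maximal if it is not contained in a larger square with the same
fingerprint. -/
def SqMaximal (M : ℕ → ℕ → ℕ) (m n i j k : ℕ) : Prop :=
  ValidSq m n i j k ∧
  ∀ i' j' k' : ℕ, ValidSq m n i' j' k' → SqContains i j k i' j' k' →
    (i', j', k') ≠ (i, j, k) → fpSq M i' j' k' ≠ fpSq M i j k

lemma fpR_mono (M : ℕ → ℕ → ℕ) {a0 a1 b0 b1 c0 c1 d0 d1 : ℕ}
    (h1 : c0 ≤ a0) (h2 : a1 ≤ c1) (h3 : d0 ≤ b0) (h4 : b1 ≤ d1) :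
    fpR M a0 a1 b0 b1 ⊆ fpR M c0 c1 d0 d1 := by
  rintro c ⟨p, q, hp0, hp1, hq0, hq1, rfl⟩
  exact ⟨p, q, le_trans h1 hp0, le_trans hp1 h2, le_trans h3 hq0, le_trans hq1 h4, rfl⟩

lemma fpR_eq_iff (M : ℕ → ℕ → ℕ) {a0 a1 b0 b1 : ℕ} (f : Set ℕ)
    (hsub : f ⊆ fpR M a0 a1 b0 b1) :
    fpR M a0 a1 b0 b1 = f ↔ ∀ p q, a0 ≤ p → p ≤ a1 → b0 ≤ q → q ≤ b1 → M p q ∈ f := by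
  constructor
  · intro h p q h1 h2 h3 h4
    rw [← h]; exact ⟨p, q, h1, h2, h3, h4, rfl⟩
  · intro h
    refine Set.Subset.antisymm ?_ hsub
    rintro c ⟨p, q, h1, h2, h3, h4, rfl⟩
    exact h p q h1 h2 h3 h4

lemma fpSq_succ (M : ℕ → ℕ → ℕ) (a b c r s : ℕ) (h1 : a + c = r) (h2 : b + c = s) :
    fpSq M a b (c + 1) = fpR M a r b s := by
  subst h1; subst h2; rfl

lemma prop_aux {A B X V P Q R : Prop} (hP : ¬P) (hQ : ¬Q) (hV : V)
    (hR1 : R → A → B → X → False) (hR2 : A → B → ¬X → R) :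
    ((P ∨ ¬A) ∨ (Q ∨ ¬B) ∨ R) ↔ ¬(V ∧ A ∧ B ∧ X) := by
  constructor
  · rintro ((h | h) | (h | h) | h) ⟨_, hA, hB, hX⟩
    · exact hP h
    · exact h hA
    · exact hQ h
    · exact h hB
    · exact hR1 h hA hB hX
  · intro h
    by_cases hA : A
    · by_cases hB : B
      · exact Or.inr (Or.inr (hR2 hA hB fun hX => h ⟨hV, hA, hB, hX⟩))
      · exact Or.inr (Or.inl (Or.inr hB))
    · exact Or.inl (Or.inr hA)

section Pieces

variable (M : ℕ → ℕ → ℕ) {m n i j k : ℕ}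

lemma sq_core (p q : ℕ) (h1 : i ≤ p) (h2 : p ≤ i + k - 1) (h3 : j ≤ q)
    (h4 : q ≤ j + k - 1) : M p q ∈ fpSq M i j k :=
  ⟨p, q, h1, h2, h3, h4, rfl⟩

lemma stripL (hk : 1 ≤ k) (hJ : 2 ≤ j) :
    fpR M i (i + k - 1) (j - 1) (j + k - 1) = fpSq M i j k ↔
      ∀ p, i ≤ p → p ≤ i + k - 1 → M p (j - 1) ∈ fpSq M i j k := by
  rw [fpR_eq_iff M (fpSq M i j k) (fpR_mono M le_rfl le_rfl (by omega) le_rfl)]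
  constructor
  · exact fun h p h1 h2 => h p (j - 1) h1 h2 le_rfl (by omega)
  · intro h p q h1 h2 h3 h4
    rcases Nat.lt_or_ge q j with hq | hq
    · rw [show q = j - 1 by omega]; exact h p h1 h2
    · exact sq_core M p q h1 h2 hq h4

lemma stripR (hk : 1 ≤ k) :
    fpR M i (i + k - 1) j (j + k) = fpSq M i j k ↔
      ∀ p, i ≤ p → p ≤ i + k - 1 → M p (j + k) ∈ fpSq M i j k := by
  rw [fpR_eq_iff M (fpSq M i j k) (fpR_mono M le_rfl le_rfl le_rfl (by omega))]
  constructor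
  · exact fun h p h1 h2 => h p (j + k) h1 h2 (by omega) le_rfl
  · intro h p q h1 h2 h3 h4
    rcases Nat.lt_or_ge q (j + k) with hq | hq
    · exact sq_core M p q h1 h2 h3 (by omega)
    · rw [show q = j + k by omega]; exact h p h1 h2

lemma stripU (hk : 1 ≤ k) :
    fpR M i (i + k) j (j + k - 1) = fpSq M i j k ↔
      ∀ q, j ≤ q → q ≤ j + k - 1 → M (i + k) q ∈ fpSq M i j k := by
  rw [fpR_eq_iff M (fpSq M i j k) (fpR_mono M le_rfl (by omega) le_rfl le_rfl)]
  constructor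
  · exact fun h q h1 h2 => h (i + k) q (by omega) le_rfl h1 h2
  · intro h p q h1 h2 h3 h4
    rcases Nat.lt_or_ge p (i + k) with hp | hp
    · exact sq_core M p q h1 (by omega) h3 h4
    · rw [show p = i + k by omega]; exact h q h3 h4

lemma stripD (hk : 1 ≤ k) (hI : 2 ≤ i) :
    fpR M (i - 1) (i + k - 1) j (j + k - 1) = fpSq M i j k ↔
      ∀ q, j ≤ q → q ≤ j + k - 1 → M (i - 1) q ∈ fpSq M i j k := by
  rw [fpR_eq_iff M (fpSq M i j k) (fpR_mono M (by omega) le_rfl le_rfl le_rfl)]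
  constructor
  · exact fun h q h1 h2 => h (i - 1) q le_rfl (by omega) h1 h2
  · intro h p q h1 h2 h3 h4
    rcases Nat.lt_or_ge p i with hp | hp
    · rw [show p = i - 1 by omega]; exact h q h3 h4
    · exact sq_core M p q hp h2 h3 h4

lemma sqUU (hk : 1 ≤ k) :
    fpR M i (i + k) j (j + k) = fpSq M i j k ↔
      ((∀ p, i ≤ p → p ≤ i + k - 1 → M p (j + k) ∈ fpSq M i j k) ∧
       (∀ q, j ≤ q → q ≤ j + k - 1 → M (i + k) q ∈ fpSq M i j k) ∧
       M (i + k) (j + k) ∈ fpSq M i j k) := by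
  rw [fpR_eq_iff M (fpSq M i j k) (fpR_mono M le_rfl (by omega) le_rfl (by omega))]
  constructor
  · intro h
    exact ⟨fun p h1 h2 => h p (j + k) h1 (by omega) (by omega) le_rfl,
           fun q h1 h2 => h (i + k) q (by omega) le_rfl h1 (by omega),
           h (i + k) (j + k) (by omega) le_rfl (by omega) le_rfl⟩
  · rintro ⟨hc, hr, hx⟩ p q h1 h2 h3 h4
    rcases Nat.lt_or_ge p (i + k) with hp | hp
    · rcases Nat.lt_or_ge q (j + k) with hq | hq
      · exact sq_core M p q h1 (by omega) h3 (by omega)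
      · rw [show q = j + k by omega]; exact hc p h1 (by omega)
    · rw [show p = i + k by omega]
      rcases Nat.lt_or_ge q (j + k) with hq | hq
      · exact hr q h3 (by omega)
      · rw [show q = j + k by omega]; exact hx

lemma sqUL (hk : 1 ≤ k) (hJ : 2 ≤ j) :
    fpR M i (i + k) (j - 1) (j + k - 1) = fpSq M i j k ↔
      ((∀ p, i ≤ p → p ≤ i + k - 1 → M p (j - 1) ∈ fpSq M i j k) ∧
       (∀ q, j ≤ q → q ≤ j + k - 1 → M (i + k) q ∈ fpSq M i j k) ∧
       M (i + k) (j - 1) ∈ fpSq M i j k) := by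
  rw [fpR_eq_iff M (fpSq M i j k) (fpR_mono M le_rfl (by omega) (by omega) le_rfl)]
  constructor
  · intro h
    exact ⟨fun p h1 h2 => h p (j - 1) h1 (by omega) le_rfl (by omega),
           fun q h1 h2 => h (i + k) q (by omega) le_rfl (by omega) h2,
           h (i + k) (j - 1) (by omega) le_rfl le_rfl (by omega)⟩
  · rintro ⟨hc, hr, hx⟩ p q h1 h2 h3 h4
    rcases Nat.lt_or_ge p (i + k) with hp | hp
    · rcases Nat.lt_or_ge q j with hq | hq
      · rw [show q = j - 1 by omega]; exact hc p h1 (by omega)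
      · exact sq_core M p q h1 (by omega) hq h4
    · rw [show p = i + k by omega]
      rcases Nat.lt_or_ge q j with hq | hq
      · rw [show q = j - 1 by omega]; exact hx
      · exact hr q hq h4

lemma sqDD (hk : 1 ≤ k) (hI : 2 ≤ i) (hJ : 2 ≤ j) :
    fpR M (i - 1) (i + k - 1) (j - 1) (j + k - 1) = fpSq M i j k ↔
      ((∀ p, i ≤ p → p ≤ i + k - 1 → M p (j - 1) ∈ fpSq M i j k) ∧
       (∀ q, j ≤ q → q ≤ j + k - 1 → M (i - 1) q ∈ fpSq M i j k) ∧
       M (i - 1) (j - 1) ∈ fpSq M i j k) := by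
  rw [fpR_eq_iff M (fpSq M i j k) (fpR_mono M (by omega) le_rfl (by omega) le_rfl)]
  constructor
  · intro h
    exact ⟨fun p h1 h2 => h p (j - 1) (by omega) h2 le_rfl (by omega),
           fun q h1 h2 => h (i - 1) q le_rfl (by omega) (by omega) h2,
           h (i - 1) (j - 1) le_rfl (by omega) le_rfl (by omega)⟩
  · rintro ⟨hc, hr, hx⟩ p q h1 h2 h3 h4
    rcases Nat.lt_or_ge p i with hp | hp
    · rw [show p = i - 1 by omega]
      rcases Nat.lt_or_ge q j with hq | hq
      · rw [show q = j - 1 by omega]; exact hx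
      · exact hr q hq h4
    · rcases Nat.lt_or_ge q j with hq | hq
      · rw [show q = j - 1 by omega]; exact hc p hp h2
      · exact sq_core M p q hp h2 hq h4

lemma sqDR (hk : 1 ≤ k) (hI : 2 ≤ i) :
    fpR M (i - 1) (i + k - 1) j (j + k) = fpSq M i j k ↔
      ((∀ p, i ≤ p → p ≤ i + k - 1 → M p (j + k) ∈ fpSq M i j k) ∧
       (∀ q, j ≤ q → q ≤ j + k - 1 → M (i - 1) q ∈ fpSq M i j k) ∧
       M (i - 1) (j + k) ∈ fpSq M i j k) := by
  rw [fpR_eq_iff M (fpSq M i j k) (fpR_mono M (by omega) le_rfl le_rfl (by omega))]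
  constructor
  · intro h
    exact ⟨fun p h1 h2 => h p (j + k) (by omega) h2 (by omega) le_rfl,
           fun q h1 h2 => h (i - 1) q le_rfl (by omega) h1 (by omega),
           h (i - 1) (j + k) le_rfl (by omega) (by omega) le_rfl⟩
  · rintro ⟨hc, hr, hx⟩ p q h1 h2 h3 h4
    rcases Nat.lt_or_ge p i with hp | hp
    · rw [show p = i - 1 by omega]
      rcases Nat.lt_or_ge q (j + k) with hq | hq
      · exact hr q h3 (by omega)
      · rw [show q = j + k by omega]; exact hx
    · rcases Nat.lt_or_ge q (j + k) with hq | hq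
      · exact sq_core M p q hp h2 h3 (by omega)
      · rw [show q = j + k by omega]; exact hc p hp h2

lemma stepA (hi : 1 ≤ i) (hj : 1 ≤ j) (hk : 1 ≤ k) (him : i + k - 1 ≤ m)
    (hjn : j + k - 1 ≤ n) : SqMaximal M m n i j k ↔
      (¬(ValidSq m n i (j - 1) (k + 1) ∧ fpSq M i (j - 1) (k + 1) = fpSq M i j k)) ∧
      (¬(ValidSq m n (i - 1) (j - 1) (k + 1) ∧ fpSq M (i - 1) (j - 1) (k + 1) = fpSq M i j k)) ∧
      (¬(ValidSq m n i j (k + 1) ∧ fpSq M i j (k + 1) = fpSq M i j k)) ∧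
      (¬(ValidSq m n (i - 1) j (k + 1) ∧ fpSq M (i - 1) j (k + 1) = fpSq M i j k)) := by
  constructor
  · intro hmax
    refine ⟨?_, ?_, ?_, ?_⟩ <;> rintro ⟨hval, hfp⟩
    · exact hmax.2 i (j - 1) (k + 1) hval
        ⟨le_rfl, by omega, by omega, by omega⟩
        (by intro h; simp only [Prod.mk.injEq] at h; omega) hfp
    · exact hmax.2 (i - 1) (j - 1) (k + 1) hval
        ⟨by omega, by omega, by omega, by omega⟩
        (by intro h; simp only [Prod.mk.injEq] at h; omega) hfp
    · exact hmax.2 i j (k + 1) hval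
        ⟨le_rfl, le_rfl, by omega, by omega⟩
        (by intro h; simp only [Prod.mk.injEq] at h; omega) hfp
    · exact hmax.2 (i - 1) j (k + 1) hval
        ⟨by omega, le_rfl, by omega, by omega⟩
        (by intro h; simp only [Prod.mk.injEq] at h; omega) hfp
  · rintro ⟨n1, n2, n3, n4⟩
    refine ⟨⟨hi, hj, hk, him, hjn⟩, ?_⟩
    intro i' j' k' hv' hc hne hfp
    obtain ⟨ha, hb, hcc, hd⟩ := hc
    obtain ⟨hi', hj', hk', him', hjn'⟩ := hv'
    have hk'k : k + 1 ≤ k' := by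
      rcases Nat.lt_or_ge k k' with h | h
      · omega
      · exfalso; apply hne
        have h1 : k' = k := by omega
        have h2 : i' = i := by omega
        have h3 : j' = j := by omega
        rw [h1, h2, h3]
    obtain ⟨a, ha1, ha2, ha3, ha4, ha5⟩ :
        ∃ a, i' ≤ a ∧ a ≤ i ∧ i + k - 1 ≤ a + k ∧ a + (k + 1) ≤ i' + k' ∧
          (a = i - 1 ∨ a = i) := by
      rcases Nat.lt_or_ge i' i with h | h
      · exact ⟨i - 1, by omega, by omega, by omega, by omega, Or.inl rfl⟩
      · exact ⟨i, by omega, le_rfl, by omega, by omega, Or.inr rfl⟩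
    obtain ⟨b, hb1, hb2, hb3, hb4, hb5⟩ :
        ∃ b, j' ≤ b ∧ b ≤ j ∧ j + k - 1 ≤ b + k ∧ b + (k + 1) ≤ j' + k' ∧
          (b = j - 1 ∨ b = j) := by
      rcases Nat.lt_or_ge j' j with h | h
      · exact ⟨j - 1, by omega, by omega, by omega, by omega, Or.inl rfl⟩
      · exact ⟨j, by omega, le_rfl, by omega, by omega, Or.inr rfl⟩
    have hvab : ValidSq m n a b (k + 1) := ⟨by omega, by omega, by omega, by omega, by omega⟩
    have hsub1 : fpSq M a b (k + 1) ⊆ fpSq M i' j' k' := by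
      show fpR M a (a + (k + 1) - 1) b (b + (k + 1) - 1) ⊆
        fpR M i' (i' + k' - 1) j' (j' + k' - 1)
      exact fpR_mono M ha1 (by omega) hb1 (by omega)
    have hsub2 : fpSq M i j k ⊆ fpSq M a b (k + 1) := by
      show fpR M i (i + k - 1) j (j + k - 1) ⊆
        fpR M a (a + (k + 1) - 1) b (b + (k + 1) - 1)
      exact fpR_mono M ha2 (by omega) hb2 (by omega)
    have hfpab : fpSq M a b (k + 1) = fpSq M i j k :=
      Set.Subset.antisymm (hsub1.trans hfp.subset) hsub2
    rcases ha5 with rfl | rfl <;> rcases hb5 with rfl | rfl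
    · exact n2 ⟨hvab, hfpab⟩
    · exact n4 ⟨hvab, hfpab⟩
    · exact n1 ⟨hvab, hfpab⟩
    · exact n3 ⟨hvab, hfpab⟩

lemma conj1 (hi : 1 ≤ i) (hj : 1 ≤ j) (hk : 1 ≤ k) (him : i + k - 1 ≤ m)
    (hjn : j + k - 1 ≤ n) :
    ((j = 1 ∨ fpR M i (i + k - 1) (j - 1) (j + k - 1) ≠ fpSq M i j k) ∨
     (i + k - 1 = m ∨ fpR M i (i + k) j (j + k - 1) ≠ fpSq M i j k) ∨
     ((j = 1 ∨ i + k - 1 = m) ∨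
       (M (i + k) (j - 1) ∉ fpSq M i j k ∧
        fpR M i (i + k) j (j + k - 1) = fpSq M i j k))) ↔
    ¬(ValidSq m n i (j - 1) (k + 1) ∧ fpSq M i (j - 1) (k + 1) = fpSq M i j k) := by
  by_cases hJ1 : j = 1
  · constructor
    · rintro _ ⟨⟨_, h2, _, _, _⟩, _⟩; omega
    · exact fun _ => Or.inl (Or.inl hJ1)
  · by_cases hm : i + k - 1 = m
    · constructor
      · rintro _ ⟨⟨_, _, _, h4, _⟩, _⟩; omega
      · exact fun _ => Or.inr (Or.inl (Or.inl hm))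
    · have hval : ValidSq m n i (j - 1) (k + 1) :=
        ⟨hi, by omega, by omega, by omega, by omega⟩
      rw [fpSq_succ M i (j - 1) k (i + k) (j + k - 1) rfl (by omega)]
      simp only [ne_eq]
      rw [sqUL M hk (by omega), stripL M hk (by omega), stripU M hk]
      exact prop_aux hJ1 hm hval
        (fun r _ _ hX => by
          rcases r with (h | h) | ⟨hx, _⟩
          exacts [absurd h hJ1, absurd h hm, hx hX])
        (fun _ hB hX => Or.inr ⟨hX, hB⟩)

lemma conj2 (hi : 1 ≤ i) (hj : 1 ≤ j) (hk : 1 ≤ k) (him : i + k - 1 ≤ m)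
    (hjn : j + k - 1 ≤ n) :
    ((j = 1 ∨ fpR M i (i + k - 1) (j - 1) (j + k - 1) ≠ fpSq M i j k) ∨
     (i = 1 ∨ fpR M (i - 1) (i + k - 1) j (j + k - 1) ≠ fpSq M i j k) ∨
     ((i = 1 ∨ j = 1) ∨ M (i - 1) (j - 1) ∉ fpSq M i j k)) ↔
    ¬(ValidSq m n (i - 1) (j - 1) (k + 1) ∧ fpSq M (i - 1) (j - 1) (k + 1) = fpSq M i j k) := by
  by_cases hI1 : i = 1
  · constructor
    · rintro _ ⟨⟨h1, _, _, _, _⟩, _⟩; omega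
    · exact fun _ => Or.inr (Or.inl (Or.inl hI1))
  · by_cases hJ1 : j = 1
    · constructor
      · rintro _ ⟨⟨_, h2, _, _, _⟩, _⟩; omega
      · exact fun _ => Or.inl (Or.inl hJ1)
    · have hval : ValidSq m n (i - 1) (j - 1) (k + 1) :=
        ⟨by omega, by omega, by omega, by omega, by omega⟩
      rw [fpSq_succ M (i - 1) (j - 1) k (i + k - 1) (j + k - 1) (by omega) (by omega)]
      simp only [ne_eq]
      rw [sqDD M hk (by omega) (by omega), stripL M hk (by omega), stripD M hk (by omega)]
      exact prop_aux hJ1 hI1 hval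
        (fun r _ _ hX => by
          rcases r with (h | h) | hx
          exacts [absurd h hI1, absurd h hJ1, hx hX])
        (fun _ _ hX => Or.inr hX)

lemma conj3 (hi : 1 ≤ i) (hj : 1 ≤ j) (hk : 1 ≤ k) (him : i + k - 1 ≤ m)
    (hjn : j + k - 1 ≤ n) :
    ((j + k - 1 = n ∨ fpR M i (i + k - 1) j (j + k) ≠ fpSq M i j k) ∨
     (i + k - 1 = m ∨ fpR M i (i + k) j (j + k - 1) ≠ fpSq M i j k) ∨
     ((i + k - 1 = m ∨ j + k - 1 = n) ∨ M (i + k) (j + k) ∉ fpSq M i j k)) ↔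
    ¬(ValidSq m n i j (k + 1) ∧ fpSq M i j (k + 1) = fpSq M i j k) := by
  by_cases hm : i + k - 1 = m
  · constructor
    · rintro _ ⟨⟨_, _, _, h4, _⟩, _⟩; omega
    · exact fun _ => Or.inr (Or.inl (Or.inl hm))
  · by_cases hn : j + k - 1 = n
    · constructor
      · rintro _ ⟨⟨_, _, _, _, h5⟩, _⟩; omega
      · exact fun _ => Or.inl (Or.inl hn)
    · have hval : ValidSq m n i j (k + 1) := ⟨hi, hj, by omega, by omega, by omega⟩
      rw [fpSq_succ M i j k (i + k) (j + k) rfl rfl]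
      simp only [ne_eq]
      rw [sqUU M hk, stripR M hk, stripU M hk]
      exact prop_aux hn hm hval
        (fun r _ _ hX => by
          rcases r with (h | h) | hx
          exacts [absurd h hm, absurd h hn, hx hX])
        (fun _ _ hX => Or.inr hX)

lemma conj4 (hi : 1 ≤ i) (hj : 1 ≤ j) (hk : 1 ≤ k) (him : i + k - 1 ≤ m)
    (hjn : j + k - 1 ≤ n) :
    ((j + k - 1 = n ∨ fpR M i (i + k - 1) j (j + k) ≠ fpSq M i j k) ∨
     (i = 1 ∨ fpR M (i - 1) (i + k - 1) j (j + k - 1) ≠ fpSq M i j k) ∨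
     ((i = 1 ∨ j + k - 1 = n) ∨
       (M (i - 1) (j + k) ∉ fpSq M i j k ∧
        fpR M i (i + k - 1) j (j + k) = fpSq M i j k))) ↔
    ¬(ValidSq m n (i - 1) j (k + 1) ∧ fpSq M (i - 1) j (k + 1) = fpSq M i j k) := by
  by_cases hI1 : i = 1
  · constructor
    · rintro _ ⟨⟨h1, _, _, _, _⟩, _⟩; omega
    · exact fun _ => Or.inr (Or.inl (Or.inl hI1))
  · by_cases hn : j + k - 1 = n
    · constructor
      · rintro _ ⟨⟨_, _, _, _, h5⟩, _⟩; omega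
      · exact fun _ => Or.inl (Or.inl hn)
    · have hval : ValidSq m n (i - 1) j (k + 1) :=
        ⟨by omega, hj, by omega, by omega, by omega⟩
      rw [fpSq_succ M (i - 1) j k (i + k - 1) (j + k) (by omega) rfl]
      simp only [ne_eq]
      rw [sqDR M hk (by omega), stripR M hk, stripD M hk (by omega)]
      exact prop_aux hn hI1 hval
        (fun r _ _ hX => by
          rcases r with (h | h) | ⟨hx, _⟩
          exacts [absurd h hI1, absurd h hn, hx hX])
        (fun hA _ hX => Or.inr ⟨hX, hA⟩)

end Pieces

set_option maxHeartbeats 1000000 in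
/-- A square [i,j;k] is maximal among squares iff
(L ∨ U ∨ LU) ∧ (L ∨ D ∨ LD) ∧ (R ∨ U ∨ RU) ∧ (R ∨ D ∨ RD) holds, where each
condition takes the value true when the corresponding extension leaves the
image. -/
theorem statement13 (m n σ : ℕ) (M : ℕ → ℕ → ℕ)
    (hM : ∀ i j, 1 ≤ i → i ≤ m → 1 ≤ j → j ≤ n → 1 ≤ M i j ∧ M i j ≤ σ)
    (i j k : ℕ) (hv : ValidSq m n i j k) :
    SqMaximal M m n i j k ↔
      (let f := fpSq M i j k
       let L := j = 1 ∨ fpR M i (i + k - 1) (j - 1) (j + k - 1) ≠ f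
       let R := j + k - 1 = n ∨ fpR M i (i + k - 1) j (j + k) ≠ f
       let U := i + k - 1 = m ∨ fpR M i (i + k) j (j + k - 1) ≠ f
       let D := i = 1 ∨ fpR M (i - 1) (i + k - 1) j (j + k - 1) ≠ f
       let LU := (j = 1 ∨ i + k - 1 = m) ∨
         (M (i + k) (j - 1) ∉ f ∧ fpR M i (i + k) j (j + k - 1) = f)
       let LD := (i = 1 ∨ j = 1) ∨ M (i - 1) (j - 1) ∉ f
       let RU := (i + k - 1 = m ∨ j + k - 1 = n) ∨ M (i + k) (j + k) ∉ f
       let RD := (i = 1 ∨ j + k - 1 = n) ∨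
         (M (i - 1) (j + k) ∉ f ∧ fpR M i (i + k - 1) j (j + k) = f)
       (L ∨ U ∨ LU) ∧ (L ∨ D ∨ LD) ∧ (R ∨ U ∨ RU) ∧ (R ∨ D ∨ RD)) := by
  obtain ⟨hi, hj, hk, him, hjn⟩ := hv
  exact (stepA M hi hj hk him hjn).trans
    (and_congr (conj1 M hi hj hk him hjn).symm
      (and_congr (conj2 M hi hj hk him hjn).symm
        (and_congr (conj3 M hi hj hk him hjn).symm
          (conj4 M hi hj hk him hjn).symm)))
end

section
/- For an m×n image with colors in [1,σ], the number of maximal squares is at most n·m·σ. -/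
lemma fp_subset {m n σ : ℕ} {M : ℕ → ℕ → ℕ}
    (hM : ∀ i j, 1 ≤ i → i ≤ m → 1 ≤ j → j ≤ n → 1 ≤ M i j ∧ M i j ≤ σ)
    {i j k : ℕ} (h : ValidSq m n i j k) : fpSq M i j k ⊆ Set.Icc 1 σ := by
  obtain ⟨hi, hj, hk, him, hjn⟩ := h
  rintro c ⟨i', j', h1, h2, h3, h4, rfl⟩
  exact hM i' j' (hi.trans h1) (h2.trans him) (hj.trans h3) (h4.trans hjn)

lemma fp_mem {M : ℕ → ℕ → ℕ} {i j k : ℕ} (hk : 1 ≤ k) : M i j ∈ fpSq M i j k := by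
  exact ⟨i, j, le_refl _, by omega, le_refl _, by omega, rfl⟩

lemma fp_mono {M : ℕ → ℕ → ℕ} {i j k k' : ℕ} (h : k ≤ k') :
    fpSq M i j k ⊆ fpSq M i j k' := by
  rintro c ⟨i', j', h1, h2, h3, h4, rfl⟩
  exact ⟨i', j', h1, h2.trans (by omega), h3, h4.trans (by omega), rfl⟩

/-- The number of maximal squares of an m×n image with colors in [1,σ] is at most
n·m·σ. -/
theorem statement14 (m n σ : ℕ) (M : ℕ → ℕ → ℕ)
    (hM : ∀ i j, 1 ≤ i → i ≤ m → 1 ≤ j → j ≤ n → 1 ≤ M i j ∧ M i j ≤ σ) :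
    {s : ℕ × ℕ × ℕ | SqMaximal M m n s.1 s.2.1 s.2.2}.ncard ≤ n * m * σ := by
  set S := {s : ℕ × ℕ × ℕ | SqMaximal M m n s.1 s.2.1 s.2.2}
  set T : Finset (ℕ × ℕ × ℕ) := (Finset.Icc 1 m) ×ˢ (Finset.Icc 1 n) ×ˢ (Finset.Icc 1 σ)
  have hfinfp : ∀ i j k, ValidSq m n i j k → (fpSq M i j k).Finite := fun i j k h =>
    (Set.finite_Icc 1 σ).subset (fp_subset hM h)
  have key : ∀ i j k k', SqMaximal M m n i j k → SqMaximal M m n i j k' → k < k' →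
      (fpSq M i j k).ncard ≠ (fpSq M i j k').ncard := by
    intro i j k k' hs hs' hkk heq
    have hsub := fp_mono (M := M) (i := i) (j := j) hkk.le
    have : fpSq M i j k' = fpSq M i j k := by
      refine (Set.eq_of_subset_of_ncard_le hsub (le_of_eq heq.symm)
        (hfinfp _ _ _ hs'.1)).symm
    obtain ⟨⟨hi, hj, hk, _, _⟩, hmax⟩ := hs
    exact hmax i j k' hs'.1 ⟨le_refl _, le_refl _, by omega, by omega⟩
      (by simp [Prod.ext_iff]; omega) this
  have hmap : ∀ s ∈ S, (s.1, s.2.1, (fpSq M s.1 s.2.1 s.2.2).ncard) ∈ (T : Set (ℕ × ℕ × ℕ)) := by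
    rintro ⟨i, j, k⟩ hs
    obtain ⟨⟨hi, hj, hk, him, hjn⟩, -⟩ := hs
    dsimp only at hi hj hk him hjn
    have hfin := hfinfp i j k ⟨hi, hj, hk, him, hjn⟩
    have hpos : 0 < (fpSq M i j k).ncard :=
      (Set.ncard_pos hfin).2 ⟨M i j, fp_mem hk⟩
    have hle : (fpSq M i j k).ncard ≤ σ := by
      calc (fpSq M i j k).ncard ≤ (Set.Icc 1 σ).ncard :=
            Set.ncard_le_ncard (fp_subset hM ⟨hi, hj, hk, him, hjn⟩) (Set.finite_Icc 1 σ)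
        _ = σ := by rw [← Finset.coe_Icc, Set.ncard_coe_finset, Nat.card_Icc]; omega
    simp only [T, Finset.coe_product, Set.mem_prod, Finset.mem_coe, Finset.mem_Icc]
    refine ⟨⟨hi, by omega⟩, ⟨hj, by omega⟩, hpos, hle⟩
  have hinj : Set.InjOn (fun s : ℕ × ℕ × ℕ => (s.1, s.2.1, (fpSq M s.1 s.2.1 s.2.2).ncard)) S := by
    rintro ⟨i, j, k⟩ hs ⟨i', j', k'⟩ hs' h
    simp only [Prod.ext_iff] at h ⊢
    obtain ⟨rfl, rfl, hc⟩ := h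
    refine ⟨rfl, rfl, ?_⟩
    rcases lt_trichotomy k k' with h | h | h
    · exact absurd hc (key _ _ _ _ hs hs' h)
    · exact h
    · exact absurd hc.symm (key _ _ _ _ hs' hs h)
  have := Set.ncard_le_ncard_of_injOn _ hmap hinj (T.finite_toSet)
  rw [Set.ncard_coe_finset] at this
  refine this.trans ?_
  simp [T, Nat.card_Icc]
  ring_nf
  omega
end
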